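/- Let X be a finite-dimensional real inner product space, m ≥ 2, I = {1,…,m}, and for each i ∈ I let g_i : X → (−∞,+∞] be proper lower semicontinuous convex. On the Hilbert direct sum 𝐗 = X^m, let Δ = {(x,…,x) : x ∈ X} be the diagonal, 𝐠(x₁,…,x_m) = Σ_i g_i(x_i), 𝐓 = Id − P_Δ + Prox_𝐠 ∘ R_Δ the Douglas–Rachford operator on 𝐗, and 𝐯 = (v₁,…,v_m) = P_{closure(ran(Id−𝐓))}(0). Assume 0 ∈ Δ^⊥ + dom 𝐠* and that 𝐙 = {𝐱 ∈ 𝐗 : 𝐯 ∈ N_Δ(𝐱) + ∂𝐠(𝐱 − 𝐯)} is nonempty. If j ∈ I satisfies dom g_j = X, then v_j = 0. -/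

import Mathlib

open scoped RealInnerProductSpace Pointwise
open Filter Topology

noncomputable section

variable {X : Type*}

section Defs
variable [NormedAddCommGroup X] [InnerProductSpace ℝ X]

/-- `p` is the metric projection of `x` onto `S`: `p ∈ S` and
`⟪s − p, x − p⟫ ≤ 0` for all `s ∈ S`. -/
def IsMetricProj (S : Set X) (x p : X) : Prop :=
  p ∈ S ∧ ∀ s ∈ S, ⟪s - p, x - p⟫ ≤ (0 : ℝ)

/-- a function `X → (−∞,+∞]` is proper: never `−∞` and somewhere finite. -/
def EProper (g : X → EReal) : Prop :=
  (∀ x, g x ≠ ⊥) ∧ ∃ x, g x ≠ ⊤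

/-- convexity for extended-real-valued functions. -/
def EConvexOn (g : X → EReal) : Prop :=
  ∀ x y : X, ∀ a b : ℝ, 0 ≤ a → 0 ≤ b → a + b = 1 →
    g (a • x + b • y) ≤ (a : EReal) * g x + (b : EReal) * g y

/-- the convex subdifferential `∂g(x)`. -/
def ESubdiff (g : X → EReal) (x : X) : Set X :=
  {xs | ∀ z : X, g x + ((⟪z - x, xs⟫ : ℝ) : EReal) ≤ g z}

/-- the Fenchel conjugate `g*`. -/
def EConj (g : X → EReal) (xs : X) : EReal :=
  ⨆ x : X, ((⟪x, xs⟫ : ℝ) : EReal) - g x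

/-- `prox` is the proximal mapping of `g`: `prox x` minimizes
`y ↦ g y + ‖y − x‖²/2`. -/
def IsProx (g : X → EReal) (prox : X → X) : Prop :=
  ∀ x y : X,
    g (prox x) + ((‖prox x - x‖ ^ 2 / 2 : ℝ) : EReal) ≤
      g y + ((‖y - x‖ ^ 2 / 2 : ℝ) : EReal)

/-- the normal cone operator of a closed linear subspace:
`N_U(x) = U^⊥` if `x ∈ U`, and `∅` otherwise. -/
def normalCone (U : Submodule ℝ X) (x : X) : Set X :=
  {u | x ∈ U ∧ u ∈ Uᗮ}

/-- `c` is a weak cluster point of the sequence `s`, i.e. the weak limit of a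
subsequence of `s`. -/
def IsWeakClusterPt (s : ℕ → X) (c : X) : Prop :=
  ∃ φ : ℕ → ℕ, StrictMono φ ∧
    ∀ w : X, Tendsto (fun k => (⟪s (φ k), w⟫ : ℝ)) atTop (𝓝 ⟪c, w⟫)

end Defs

section ProductSetup
variable [NormedAddCommGroup X] [InnerProductSpace ℝ X] {m : ℕ}

/-- the inner product of the Hilbert direct sum `𝐗 = X^m`:
`⟪𝐱,𝐲⟫ = Σᵢ ⟪xᵢ,yᵢ⟫`. -/
def bInner (x y : Fin m → X) : ℝ := ∑ i, ⟪x i, y i⟫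

/-- the separable sum `𝐠 = ⊕ᵢ gᵢ`, `𝐠(x₁,…,x_m) = Σᵢ gᵢ(xᵢ)`. -/
def bSum (g : Fin m → X → EReal) (x : Fin m → X) : EReal := ∑ i, g i (x i)

/-- the subdifferential of `𝐠` on `𝐗` (equivalently, `∂g₁ × ⋯ × ∂g_m`). -/
def bSubdiff (g : Fin m → X → EReal) (x : Fin m → X) : Set (Fin m → X) :=
  {b | ∀ z : Fin m → X, bSum g x + ((bInner (z - x) b : ℝ) : EReal) ≤ bSum g z}

/-- metric projection characterization in `𝐗 = X^m`. -/
def bIsMetricProj (S : Set (Fin m → X)) (x p : Fin m → X) : Prop :=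
  p ∈ S ∧ ∀ s ∈ S, bInner (s - p) (x - p) ≤ (0 : ℝ)

end ProductSetup


section AuxHelpers
set_option linter.unusedSectionVars false

lemma aux_sum_ne_bot {ι : Type*} {s : Finset ι} {F : ι → EReal}
    (hb : ∀ i ∈ s, F i ≠ ⊥) : ∑ i ∈ s, F i ≠ ⊥ := by
  classical
  induction s using Finset.induction_on with
  | empty => simp
  | insert a s' hns ih =>
    rw [Finset.sum_insert hns]
    rw [Ne, EReal.add_eq_bot_iff]
    push_neg
    exact ⟨hb a (Finset.mem_insert_self a s'),
      ih fun i hi => hb i (Finset.mem_insert_of_mem hi)⟩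

lemma aux_sum_ne_top {ι : Type*} {s : Finset ι} {F : ι → EReal}
    (hb : ∀ i ∈ s, F i ≠ ⊥) (h : ∑ i ∈ s, F i ≠ ⊤) : ∀ i ∈ s, F i ≠ ⊤ := by
  classical
  intro i hi hFi
  apply h
  rw [← Finset.add_sum_erase _ _ hi, hFi]
  exact EReal.top_add_of_ne_bot
    (aux_sum_ne_bot fun k hk => hb k (Finset.mem_of_mem_erase hk))

lemma aux_sum_coe {ι : Type*} {s : Finset ι} {F : ι → EReal}
    (hb : ∀ i ∈ s, F i ≠ ⊥) (ht : ∀ i ∈ s, F i ≠ ⊤) :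
    ∑ i ∈ s, F i = ((∑ i ∈ s, (F i).toReal : ℝ) : EReal) := by
  classical
  induction s using Finset.induction_on with
  | empty => simp
  | insert a s' hns ih =>
    rw [Finset.sum_insert hns, Finset.sum_insert hns, EReal.coe_add,
      EReal.coe_toReal (ht a (Finset.mem_insert_self a s'))
        (hb a (Finset.mem_insert_self a s')),
      ih (fun i hi => hb i (Finset.mem_insert_of_mem hi))
        (fun i hi => ht i (Finset.mem_insert_of_mem hi))]

lemma lin_nonpos {A B q : ℝ} (h : ∀ n : ℕ, A + (n : ℝ) * q ≤ B) : q ≤ 0 := by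
  by_contra hq
  push_neg at hq
  obtain ⟨n, hn⟩ := exists_nat_gt ((B - A) / q)
  have h' := h n
  rw [div_lt_iff₀ hq] at hn
  linarith

section ProxLemmas
variable {X : Type*} [NormedAddCommGroup X] [InnerProductSpace ℝ X]
variable {g : X → EReal} {prox : X → X}

lemma eproper_exists (hg : EProper g) : ∃ p, g p ≠ ⊤ ∧ g p ≠ ⊥ := by
  obtain ⟨p, hp⟩ := hg.2
  exact ⟨p, hp, hg.1 p⟩

lemma prox_finite (hg : EProper g) (hp : IsProx g prox) (t : X) :
    g (prox t) ≠ ⊤ ∧ g (prox t) ≠ ⊥ := by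
  refine ⟨?_, hg.1 _⟩
  obtain ⟨z, hz, _⟩ := eproper_exists hg
  intro htop
  have h := hp t z
  rw [htop] at h
  rw [EReal.top_add_of_ne_bot (by simp)] at h
  have : g z + ((‖z - t‖ ^ 2 / 2 : ℝ) : EReal) < ⊤ :=
    EReal.add_lt_top hz (by simp)
  exact absurd (top_le_iff.mp h) this.ne

lemma subdiff_finite (hg : EProper g) {q u : X} (hu : u ∈ ESubdiff g q) :
    g q ≠ ⊤ ∧ g q ≠ ⊥ := by
  refine ⟨?_, hg.1 _⟩
  obtain ⟨z, hz, _⟩ := eproper_exists hg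
  intro htop
  have h := hu z
  rw [htop, EReal.top_add_of_ne_bot (by simp)] at h
  exact hz (top_le_iff.mp h)

lemma esubdiff_toReal (hg : EProper g) {q u : X} (hu : u ∈ ESubdiff g q)
    {z : X} (hz : g z ≠ ⊤) :
    (g q).toReal + ⟪z - q, u⟫ ≤ (g z).toReal := by
  have h := hu z
  obtain ⟨hq1, hq2⟩ := subdiff_finite hg hu
  rw [← EReal.coe_toReal hq1 hq2, ← EReal.coe_toReal hz (hg.1 z), ← EReal.coe_add] at h
  exact_mod_cast h

lemma mem_esubdiff (hg : EProper g) {q u : X} (hq : g q ≠ ⊤)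
    (h : ∀ z, g z ≠ ⊤ → (g q).toReal + ⟪z - q, u⟫ ≤ (g z).toReal) :
    u ∈ ESubdiff g q := by
  intro z
  by_cases hz : g z = ⊤
  · rw [hz]; exact le_top
  · rw [← EReal.coe_toReal hq (hg.1 q), ← EReal.coe_toReal hz (hg.1 z), ← EReal.coe_add]
    exact_mod_cast h z hz

lemma prox_subgrad (hg : EProper g) (hconv : EConvexOn g) (hp : IsProx g prox)
    (t : X) : (t - prox t) ∈ ESubdiff g (prox t) := by
  set p := prox t with hpdef
  obtain ⟨hpt, hpb⟩ := prox_finite hg hp t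
  apply mem_esubdiff hg hpt
  intro z hz
  set A := (g p).toReal
  set B := (g z).toReal
  have hgp : g p = (A : EReal) := (EReal.coe_toReal hpt hpb).symm
  have hgz : g z = (B : EReal) := (EReal.coe_toReal hz (hg.1 z)).symm
  have key : ∀ s : ℝ, 0 < s → s ≤ 1 →
      A + ⟪z - p, t - p⟫ ≤ B + s * (‖z - p‖ ^ 2 / 2) := by
    intro s hs hs1
    have hcv := hconv p z (1 - s) s (by linarith) (le_of_lt hs) (by ring)
    have hpx := hp t ((1 - s) • p + s • z)
    have hchain :
        g p + ((‖p - t‖ ^ 2 / 2 : ℝ) : EReal) ≤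
          ((1 - s : ℝ) : EReal) * g p + (s : EReal) * g z +
            ((‖((1 - s) • p + s • z) - t‖ ^ 2 / 2 : ℝ) : EReal) :=
      le_trans hpx (add_le_add_left hcv _)
    rw [hgp, hgz] at hchain
    rw [← EReal.coe_mul, ← EReal.coe_mul, ← EReal.coe_add, ← EReal.coe_add,
      ← EReal.coe_add] at hchain
    have hre : A + ‖p - t‖ ^ 2 / 2 ≤
        (1 - s) * A + s * B + ‖((1 - s) • p + s • z) - t‖ ^ 2 / 2 := by
      exact_mod_cast hchain
    have hexp : ((1 - s) • p + s • z) - t = (p - t) + s • (z - p) := by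
      rw [sub_smul, one_smul, smul_sub]; abel
    have hnorm : ‖((1 - s) • p + s • z) - t‖ ^ 2 =
        ‖p - t‖ ^ 2 + 2 * (s * ⟪p - t, z - p⟫) + s ^ 2 * ‖z - p‖ ^ 2 := by
      rw [hexp, norm_add_sq_real, real_inner_smul_right, norm_smul]
      simp [mul_pow, abs_of_nonneg (le_of_lt hs)]
      try ring
    rw [hnorm] at hre
    have hsym : (⟪p - t, z - p⟫ : ℝ) = - ⟪z - p, t - p⟫ := by
      rw [show p - t = -(t - p) by abel, inner_neg_left]
      rw [real_inner_comm]
    have h2 : s * (A + ⟪z - p, t - p⟫) ≤ s * (B + s * (‖z - p‖ ^ 2 / 2)) := by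
      nlinarith [hre, hsym]
    have := le_of_mul_le_mul_left h2 hs
    linarith
  by_contra hcon
  push_neg at hcon
  set d := A + ⟪z - p, t - p⟫ - B with hd
  have hdpos : 0 < d := by simp [hd]; linarith
  set C := ‖z - p‖ ^ 2 / 2 with hC
  have hC0 : 0 ≤ C := by positivity
  have hs : 0 < min 1 (d / (2 * C + 1)) := by
    apply lt_min one_pos
    positivity
  have h := key _ hs (min_le_left _ _)
  have hle : min 1 (d / (2 * C + 1)) * C ≤ (d / (2 * C + 1)) * C :=
    mul_le_mul_of_nonneg_right (min_le_right _ _) hC0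
  have : (d / (2 * C + 1)) * C < d := by
    rw [div_mul_eq_mul_div, div_lt_iff₀ (by linarith)]
    nlinarith
  linarith

lemma prox_of_subgrad (hg : EProper g) (hp : IsProx g prox) {q u : X}
    (hu : u ∈ ESubdiff g q) : prox (q + u) = q := by
  set t := q + u with ht
  set p := prox t with hpdef
  obtain ⟨hqt, hqb⟩ := subdiff_finite hg hu
  obtain ⟨hpt, hpb⟩ := prox_finite hg hp t
  set A := (g p).toReal
  set Q := (g q).toReal
  have h1 : A + ‖p - t‖ ^ 2 / 2 ≤ Q + ‖q - t‖ ^ 2 / 2 := by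
    have := hp t q
    rw [← EReal.coe_toReal hpt hpb, ← EReal.coe_toReal hqt hqb,
      ← EReal.coe_add, ← EReal.coe_add] at this
    exact_mod_cast this
  have h2 : Q + ⟪p - q, u⟫ ≤ A := esubdiff_toReal hg hu hpt
  have e1 : ‖p - t‖ ^ 2 = ‖p - q‖ ^ 2 - 2 * ⟪p - q, u⟫ + ‖u‖ ^ 2 := by
    have : p - t = (p - q) - u := by rw [ht]; abel
    rw [this, norm_sub_sq_real]
  have e2 : ‖q - t‖ ^ 2 = ‖u‖ ^ 2 := by
    have : q - t = -u := by rw [ht]; abel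
    rw [this, norm_neg]
  have : ‖p - q‖ ^ 2 ≤ 0 := by nlinarith
  have : ‖p - q‖ = 0 := by nlinarith [norm_nonneg (p - q)]
  have := norm_eq_zero.mp this
  exact sub_eq_zero.mp this

lemma prox_firm (hg : EProper g) (hconv : EConvexOn g) (hp : IsProx g prox)
    (t t' : X) :
    ‖prox t - prox t'‖ ^ 2 ≤ ⟪prox t - prox t', t - t'⟫ := by
  set p := prox t
  set p' := prox t'
  have h1 := esubdiff_toReal hg (prox_subgrad hg hconv hp t)
    (z := p') (prox_finite hg hp t').1
  have h2 := esubdiff_toReal hg (prox_subgrad hg hconv hp t')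
    (z := p) (prox_finite hg hp t).1
  have e : ⟪p - p', t - t'⟫ - ‖p - p'‖ ^ 2 =
      -(⟪p' - p, t - p⟫ + ⟪p - p', t' - p'⟫) := by
    rw [← real_inner_self_eq_norm_sq]
    simp only [inner_sub_left, inner_sub_right]
    rw [real_inner_comm p' p, real_inner_comm t p, real_inner_comm t' p,
      real_inner_comm t p', real_inner_comm t' p']
    ring
  linarith [h1, h2, e.ge]

lemma conj_lb (hg : EProper g) {w : X} (hw : EConj g w ≠ ⊤) {x : X}
    (hx : g x ≠ ⊤) : ⟪x, w⟫ - (EConj g w).toReal ≤ (g x).toReal := by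
  have hle : ((⟪x, w⟫ : ℝ) : EReal) - g x ≤ EConj g w := by
    unfold EConj
    exact le_iSup (fun y : X => ((⟪y, w⟫ : ℝ) : EReal) - g y) x
  have hgx : g x = ((g x).toReal : EReal) := (EReal.coe_toReal hx (hg.1 x)).symm
  rw [hgx, ← EReal.coe_sub] at hle
  have hb : EConj g w ≠ ⊥ := by
    intro hbot
    rw [hbot] at hle
    exact (EReal.coe_ne_bot _) (le_bot_iff.mp hle)
  rw [← EReal.coe_toReal hw hb] at hle
  have : ⟪x, w⟫ - (g x).toReal ≤ (EConj g w).toReal := by exact_mod_cast hle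
  linarith

end ProxLemmas
end AuxHelpers

/-- In the product-space setup on `𝐗 = X^m` (with the diagonal
`Δ`, `𝐠 = ⊕ᵢ gᵢ`, the Douglas–Rachford operator `𝐓 = Id − P_Δ + Prox_𝐠 ∘ R_Δ`
where `P_Δ 𝐱 = (x̄,…,x̄)`, `x̄ = (1/m) Σᵢ xᵢ`, and the minimal displacement vector
`𝐯 = P_{closure(ran(Id−𝐓))} 0`), assuming `0 ∈ Δ^⊥ + dom 𝐠*`
(`Δ^⊥ = {𝐮 : Σᵢ uᵢ = 0}`, `dom 𝐠* = Πᵢ dom gᵢ*`) and `𝐙 ≠ ∅`: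
if `dom g_j = X` then `v_j = 0`. -/
theorem product_displacement_component_zero
    [NormedAddCommGroup X] [InnerProductSpace ℝ X] [FiniteDimensional ℝ X]
    {m : ℕ} (hm : 2 ≤ m)
    (g : Fin m → X → EReal)
    (hgproper : ∀ i, EProper (g i)) (hglsc : ∀ i, LowerSemicontinuous (g i))
    (hgconv : ∀ i, EConvexOn (g i))
    (prox : Fin m → X → X) (hprox : ∀ i, IsProx (g i) (prox i))
    (PD T : (Fin m → X) → (Fin m → X))
    (hPD : ∀ x : Fin m → X, PD x = fun _ => (m : ℝ)⁻¹ • ∑ i, x i)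
    (hT : ∀ x : Fin m → X, T x = x - PD x + fun i => prox i ((2 • PD x - x) i))
    (v : Fin m → X)
    (hv : bIsMetricProj (closure (Set.range fun x : Fin m → X => x - T x)) 0 v)
    (hCQ : ∃ u w : Fin m → X,
      (∑ i, u i) = (0 : X) ∧ (∀ i, EConj (g i) (w i) ≠ ⊤) ∧ u + w = 0)
    (Z : Set (Fin m → X))
    (hZ : Z = {x | ∃ a b : Fin m → X,
      ((∃ c : X, ∀ i, x i = c) ∧ (∑ i, a i) = (0 : X)) ∧
      b ∈ bSubdiff g (x - v) ∧ v = a + b})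
    (hZne : Z.Nonempty)
    (j : Fin m) (hj : ∀ t : X, g j t ≠ ⊤) :
    v j = 0 := by
  classical
  have hmpos : (0:ℝ) < (m:ℝ) := by
    have h2 : 0 < m := lt_of_lt_of_le (by norm_num) hm
    exact_mod_cast h2
  have hmne : (m:ℝ) ≠ 0 := ne_of_gt hmpos
  obtain ⟨x, hx⟩ := hZne
  rw [hZ] at hx
  obtain ⟨a, b, ⟨⟨c, hc⟩, hsuma⟩, hbsub, hvab⟩ := hx
  obtain ⟨σ, hσdef⟩ : ∃ s : X, s = ∑ i, v i := ⟨_, rfl⟩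
  obtain ⟨sb, hsbdef⟩ : ∃ s : X, s = (m:ℝ)⁻¹ • σ := ⟨_, rfl⟩
  have hσsb : σ = (m:ℝ) • sb := by
    rw [hsbdef, smul_smul, mul_inv_cancel₀ hmne, one_smul]
  have hsumb : ∑ i, b i = σ := by
    have hbv : ∀ i, b i = v i - a i := by
      intro i
      have h := congrFun hvab i
      rw [Pi.add_apply] at h
      rw [h]; abel
    rw [Finset.sum_congr rfl fun i _ => hbv i, Finset.sum_sub_distrib, hsuma,
      sub_zero, ← hσdef]
  have hxv : ∀ i, (x - v) i = c - v i := by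
    intro i; rw [Pi.sub_apply, hc i]
  -- finiteness of g i (c - v i)
  choose pts hpts using fun i => (hgproper i).2
  have hlhs : (∑ i, g i ((x - v) i)) ≠ ⊤ := by
    have h := hbsub pts
    have hrhs : bSum g pts ≠ ⊤ := by
      rw [bSum, aux_sum_coe (fun i _ => (hgproper i).1 _) (fun i _ => hpts i)]
      exact EReal.coe_ne_top _
    intro htop
    rw [bSum, htop, EReal.top_add_of_ne_bot (EReal.coe_ne_bot _)] at h
    exact hrhs (top_le_iff.mp h)
  have hfin : ∀ i, g i (c - v i) ≠ ⊤ := by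
    intro i
    have h : g i ((x - v) i) ≠ ⊤ :=
      aux_sum_ne_top (s := Finset.univ) (F := fun i => g i ((x - v) i))
        (fun k _ => (hgproper k).1 _) hlhs i (Finset.mem_univ i)
    rwa [hxv i] at h
  -- componentwise subgradients at the base point
  have hbase : ∀ i, b i ∈ ESubdiff (g i) (c - v i) := by
    intro i
    apply mem_esubdiff (hgproper i) (hfin i)
    intro z hz
    have h := hbsub (Function.update (x - v) i z)
    have hterm0 : ∀ k ∈ Finset.univ, k ≠ i →
        ⟪(Function.update (x - v) i z - (x - v)) k, b k⟫ = (0:ℝ) := by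
      intro k _ hk
      rw [Pi.sub_apply, Function.update_of_ne hk, sub_self, inner_zero_left]
    have hbi : bInner (Function.update (x - v) i z - (x - v)) b
        = ⟪z - (c - v i), b i⟫ := by
      rw [bInner, Finset.sum_eq_single_of_mem i (Finset.mem_univ i) hterm0,
        Pi.sub_apply, Function.update_self, hxv i]
    have hupdate : ∀ k, g k (Function.update (x - v) i z k)
        = Function.update (fun k => g k ((x - v) k)) i (g i z) k := by
      intro k
      by_cases hk : k = i
      · subst hk; simp
      · simp [Function.update_of_ne hk]
    have hSz : bSum g (Function.update (x - v) i z)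
        = g i z + ∑ k ∈ Finset.univ.erase i, g k ((x - v) k) := by
      rw [bSum, Finset.sum_congr rfl fun k _ => hupdate k,
        Finset.sum_update_of_mem (Finset.mem_univ i), ← Finset.erase_eq]
    have hSx : bSum g (x - v) = g i ((x - v) i)
        + ∑ k ∈ Finset.univ.erase i, g k ((x - v) k) := by
      rw [bSum, ← Finset.add_sum_erase _ _ (Finset.mem_univ i)]
    have hS : (∑ k ∈ Finset.univ.erase i, g k ((x - v) k))
        = ((∑ k ∈ Finset.univ.erase i, (g k ((x - v) k)).toReal : ℝ) : EReal) :=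
      aux_sum_coe (fun k _ => (hgproper k).1 _)
        (fun k _ => by rw [hxv k]; exact hfin k)
    rw [hbi, hSz, hSx, hS, hxv i,
      ← EReal.coe_toReal hz ((hgproper i).1 z),
      ← EReal.coe_toReal (hfin i) ((hgproper i).1 _),
      ← EReal.coe_add, ← EReal.coe_add, ← EReal.coe_add] at h
    have h' := EReal.coe_le_coe_iff.mp h
    linarith
  -- the subgradient family along the orbit
  have SG : ∀ n : ℕ, ∀ i, (b i + (n:ℝ) • (v i - sb)) ∈ ESubdiff (g i)
      (c - v i - (n:ℝ) • sb) := by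
    intro n
    induction n with
    | zero =>
      intro i
      simpa using hbase i
    | succ n ih =>
      have hPDz : ∀ (k : ℕ) (i' : Fin m),
          PD (fun i => c + v i - b i - (k:ℝ) • v i) i' = c - (k:ℝ) • sb := by
        intro k i'
        rw [hPD]
        show (m:ℝ)⁻¹ • (∑ i, (c + v i - b i - (k:ℝ) • v i)) = c - (k:ℝ) • sb
        have hsum : (∑ i, (c + v i - b i - (k:ℝ) • v i))
            = (m:ℝ) • c - (k:ℝ) • σ := by
          rw [Finset.sum_sub_distrib, Finset.sum_sub_distrib, Finset.sum_add_distrib,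
            Finset.sum_const, Finset.card_univ, Fintype.card_fin,
            ← Nat.cast_smul_eq_nsmul ℝ, hsumb, ← Finset.smul_sum, ← hσdef]
          abel
        rw [hsum, smul_sub, smul_smul, inv_mul_cancel₀ hmne, one_smul,
          smul_comm ((m:ℝ)⁻¹) ((k:ℝ)) σ, ← hsbdef]
      -- prox identity at step n
      have hproxn : ∀ i,
          prox i ((c - v i - (n:ℝ) • sb) + (b i + (n:ℝ) • (v i - sb)))
            = c - v i - (n:ℝ) • sb := fun i =>
        prox_of_subgrad (hgproper i) (hprox i) (ih i)
      -- the next orbit point and its displacement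
      set z1 : Fin m → X := fun i => c + v i - b i - ((n+1:ℕ):ℝ) • v i with hz1
      have hsmem : (z1 - T z1) ∈ closure (Set.range fun y : Fin m → X => y - T y) :=
        subset_closure ⟨z1, rfl⟩
      have hIneq := hv.2 _ hsmem
      set p1 : Fin m → X := fun i =>
        prox i ((c - v i - ((n+1:ℕ):ℝ) • sb) + (b i + ((n+1:ℕ):ℝ) • (v i - sb)))
        with hp1
      have hp1i : ∀ i, p1 i
          = prox i ((c - v i - ((n+1:ℕ):ℝ) • sb)
              + (b i + ((n+1:ℕ):ℝ) • (v i - sb))) := fun i => rfl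
      have hPDz1 : ∀ i' : Fin m, PD z1 i' = c - ((n+1:ℕ):ℝ) • sb := by
        intro i'
        rw [hz1]
        exact hPDz (n+1) i'
      have harg : ∀ i, 2 • PD z1 i - z1 i
          = (c - v i - ((n+1:ℕ):ℝ) • sb) + (b i + ((n+1:ℕ):ℝ) • (v i - sb)) := by
        intro i
        rw [hPDz1 i]
        simp only [hz1]
        rw [two_smul ℕ, smul_sub]
        abel
      have hsi : ∀ i, z1 i - T z1 i = (c - ((n+1:ℕ):ℝ) • sb) - p1 i := by
        intro i
        rw [hT z1]
        simp only [Pi.sub_apply, Pi.add_apply, Pi.smul_apply]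
        rw [harg i, hPDz1 i, ← hp1i i]
        abel
      have hcast : ((n+1:ℕ):ℝ) = (n:ℝ) + 1 := by push_cast; ring
      -- the projection inequality
      have hI : ∑ i, ⟪p1 i - (c - v i - ((n+1:ℕ):ℝ) • sb), v i⟫ ≤ (0:ℝ) := by
        have h := hIneq
        rw [bInner] at h
        refine le_trans (le_of_eq (Finset.sum_congr rfl fun i _ => ?_)) h
        simp only [Pi.sub_apply, Pi.zero_apply]
        rw [hsi i, zero_sub]
        rw [show (c - ((n+1:ℕ):ℝ) • sb) - p1 i - v i
            = -(p1 i - (c - v i - ((n+1:ℕ):ℝ) • sb)) by abel]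
        rw [inner_neg_neg]
      -- firm nonexpansiveness of each prox
      have hII : ∀ i, ‖p1 i - (c - v i - (n:ℝ) • sb)‖^2
          ≤ ⟪p1 i - (c - v i - (n:ℝ) • sb), (v i - sb) - sb⟫ := by
        intro i
        have h := prox_firm (hgproper i) (hgconv i) (hprox i)
          ((c - v i - ((n+1:ℕ):ℝ) • sb) + (b i + ((n+1:ℕ):ℝ) • (v i - sb)))
          ((c - v i - (n:ℝ) • sb) + (b i + (n:ℝ) • (v i - sb)))
        rw [hproxn i, ← hp1i i] at h
        have hdiff : ((c - v i - ((n+1:ℕ):ℝ) • sb) + (b i + ((n+1:ℕ):ℝ) • (v i - sb)))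
            - ((c - v i - (n:ℝ) • sb) + (b i + (n:ℝ) • (v i - sb)))
            = (v i - sb) - sb := by
          simp only [hcast, add_smul, one_smul, smul_sub]
          abel
        rw [hdiff] at h
        exact h
      -- termwise estimate
      have hterm : ∀ i,
          ⟪p1 i - (c - v i - ((n+1:ℕ):ℝ) • sb), p1 i - (c - v i - ((n+1:ℕ):ℝ) • sb)⟫
          ≤ ⟪p1 i - (c - v i - ((n+1:ℕ):ℝ) • sb), v i⟫ + ⟪sb, sb⟫ - ⟪sb, v i⟫ := by
        intro i
        have h := hII i
        rw [← real_inner_self_eq_norm_sq] at h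
        have hδD : p1 i - (c - v i - ((n+1:ℕ):ℝ) • sb)
            = (p1 i - (c - v i - (n:ℝ) • sb)) + sb := by
          rw [hcast, add_smul, one_smul]; abel
        rw [hδD]
        set D := p1 i - (c - v i - (n:ℝ) • sb) with hD
        simp only [inner_add_left, inner_add_right, inner_sub_right] at h ⊢
        have c1 := real_inner_comm sb D
        linarith
      have hnn : ∀ i ∈ Finset.univ,
          (0:ℝ) ≤ ⟪p1 i - (c - v i - ((n+1:ℕ):ℝ) • sb),
            p1 i - (c - v i - ((n+1:ℕ):ℝ) • sb)⟫ :=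
        fun i _ => real_inner_self_nonneg
      have hsplit : ∑ i, (⟪p1 i - (c - v i - ((n+1:ℕ):ℝ) • sb), v i⟫
            + ⟪sb, sb⟫ - ⟪sb, v i⟫)
          = (∑ i, ⟪p1 i - (c - v i - ((n+1:ℕ):ℝ) • sb), v i⟫)
            + ((m:ℝ) * ⟪sb, sb⟫ - ⟪sb, σ⟫) := by
        rw [Finset.sum_sub_distrib, Finset.sum_add_distrib, Finset.sum_const,
          Finset.card_univ, Fintype.card_fin, nsmul_eq_mul, ← inner_sum, ← hσdef]
        ring
      have hzero : (m:ℝ) * ⟪sb, sb⟫ - ⟪sb, σ⟫ = 0 := by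
        rw [hσsb, real_inner_smul_right]; ring
      have hsum0 : ∑ i, ⟪p1 i - (c - v i - ((n+1:ℕ):ℝ) • sb),
          p1 i - (c - v i - ((n+1:ℕ):ℝ) • sb)⟫ = 0 := by
        refine le_antisymm ?_ (Finset.sum_nonneg hnn)
        have h1 := Finset.sum_le_sum fun i (_ : i ∈ Finset.univ) => hterm i
        rw [hsplit, hzero] at h1
        linarith [hI]
      intro i
      have hzero_i := (Finset.sum_eq_zero_iff_of_nonneg hnn).mp hsum0 i (Finset.mem_univ i)
      have hδ0 : p1 i = c - v i - ((n+1:ℕ):ℝ) • sb :=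
        sub_eq_zero.mp (inner_self_eq_zero.mp hzero_i)
      have hps := prox_subgrad (hgproper i) (hgconv i) (hprox i)
        ((c - v i - ((n+1:ℕ):ℝ) • sb) + (b i + ((n+1:ℕ):ℝ) • (v i - sb)))
      rw [← hp1i i, hδ0, add_sub_cancel_left] at hps
      exact hps
  -- Stage 1 : σ = 0
  obtain ⟨uu, w, hsumu, hwtop, huw⟩ := hCQ
  have hsumw : ∑ i, w i = 0 := by
    have hw : ∀ i, w i = -uu i := by
      intro i
      have h := congrFun huw i
      rw [Pi.add_apply] at h
      rw [Pi.zero_apply] at h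
      exact eq_neg_of_add_eq_zero_right h
    rw [Finset.sum_congr rfl fun i _ => hw i, Finset.sum_neg_distrib, hsumu, neg_zero]
  have hkey : ⟪sb, σ⟫ ≤ 0 := by
    apply lin_nonpos (A := ∑ i, (⟪c - v i, w i⟫ - (EConj (g i) (w i)).toReal))
      (B := ∑ i, (g i (c - v i)).toReal)
    intro n
    have hper : ∀ i, (⟪c - v i, w i⟫ - (EConj (g i) (w i)).toReal)
        + ((n:ℝ) * ⟪sb, b i - w i⟫ + (n:ℝ)^2 * ⟪sb, v i - sb⟫)
        ≤ (g i (c - v i)).toReal := by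
      intro i
      have hYfin : g i (c - v i - (n:ℝ) • sb) ≠ ⊤ :=
        (subdiff_finite (hgproper i) (SG n i)).1
      have h1 := conj_lb (hgproper i) (hwtop i) hYfin
      have h2 := esubdiff_toReal (hgproper i) (SG n i) (hfin i)
      have e1 : (c - v i) - (c - v i - (n:ℝ) • sb) = (n:ℝ) • sb := by abel
      rw [e1] at h2
      have e2 : ⟪(n:ℝ) • sb, b i + (n:ℝ) • (v i - sb)⟫
          = (n:ℝ) * ⟪sb, b i⟫ + (n:ℝ)^2 * ⟪sb, v i - sb⟫ := by
        rw [inner_add_right, real_inner_smul_left, real_inner_smul_left,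
          real_inner_smul_right]
        ring
      rw [e2] at h2
      have e3 : ⟪c - v i - (n:ℝ) • sb, w i⟫
          = ⟪c - v i, w i⟫ - (n:ℝ) * ⟪sb, w i⟫ := by
        rw [inner_sub_left, real_inner_smul_left]
      rw [e3] at h1
      have e4 : (n:ℝ) * ⟪sb, b i - w i⟫ = (n:ℝ) * ⟪sb, b i⟫ - (n:ℝ) * ⟪sb, w i⟫ := by
        rw [inner_sub_right]; ring
      linarith [h1, h2, e4]
    have hsumper := Finset.sum_le_sum fun i (_ : i ∈ Finset.univ) => hper i
    have hL : ∑ i, ((⟪c - v i, w i⟫ - (EConj (g i) (w i)).toReal)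
        + ((n:ℝ) * ⟪sb, b i - w i⟫ + (n:ℝ)^2 * ⟪sb, v i - sb⟫))
        = (∑ i, (⟪c - v i, w i⟫ - (EConj (g i) (w i)).toReal)) + (n:ℝ) * ⟪sb, σ⟫ := by
      rw [Finset.sum_add_distrib, Finset.sum_add_distrib, ← Finset.mul_sum,
        ← Finset.mul_sum, ← inner_sum, ← inner_sum]
      have hb' : ∑ i, (b i - w i) = σ := by
        rw [Finset.sum_sub_distrib, hsumb, hsumw, sub_zero]
      have hv' : ∑ i, (v i - sb) = 0 := by
        rw [Finset.sum_sub_distrib, Finset.sum_const, Finset.card_univ,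
          Fintype.card_fin, ← Nat.cast_smul_eq_nsmul ℝ, ← hσdef, hσsb, sub_self]
      rw [hb', hv', inner_zero_right]
      ring
    rw [hL] at hsumper
    exact hsumper
  have hσ0 : σ = 0 := by
    rw [hsbdef, real_inner_smul_left] at hkey
    have hip : (0:ℝ) ≤ ⟪σ, σ⟫ := real_inner_self_nonneg
    have hminv : (0:ℝ) < (m:ℝ)⁻¹ := inv_pos.mpr hmpos
    have : ⟪σ, σ⟫ = 0 := by nlinarith
    exact inner_self_eq_zero.mp this
  have hsb0 : sb = 0 := by rw [hsbdef, hσ0, smul_zero]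
  -- Stage 2 : v j = 0
  have hfinal : ⟪v j, v j⟫ ≤ 0 := by
    apply lin_nonpos (A := (g j (c - v j)).toReal + ⟪v j, b j⟫) (B := (g j c).toReal)
    intro n
    have h2 := esubdiff_toReal (hgproper j) (SG n j) (z := c) (hj c)
    rw [hsb0] at h2
    rw [smul_zero, sub_zero, sub_zero] at h2
    rw [show c - (c - v j) = v j by abel] at h2
    rw [inner_add_right, real_inner_smul_right] at h2
    linarith
  exact inner_self_eq_zero.mp (le_antisymm hfinal real_inner_self_nonneg)
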